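/- On ℝ^n (n ≥ 3) with flat metric, for a smooth density f of weight w (treated as a smooth function) and ℓ ≥ 1, the commutation identity Δ^ℓ (X_B ρ) = -ℓ(n+2ℓ-2) Y_B Δ^{ℓ-1} ρ + 2ℓ Z_B^b ∇_b Δ^{ℓ-1} ρ + X_B Δ^ℓ ρ holds, where Y_B, Z_B^b, X_B are the flat-metric tractor projectors satisfying ∇_a Y_B σ = Y_B ∇_a σ, ∇_a Z_B^b μ_b = -Y_B μ_a + Z_B^b ∇_a μ_b, ∇_a X_B ρ = Z_B^b g_{ab} ρ + X_B ∇_a ρ (curvature terms vanishing). Abstractly: if V is a module with commuting operators ∇_a (a = 1..n), Δ = Σ_a ∇_a∇_a, and formal symbols Y, Z^b, X satisfying the above commutation rules with ∇_a, then the stated identity holds by induction on ℓ. -/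

import Mathlib

/-- Formula (Decomp), third line: on flat `ℝ^n`,
`Δ^ℓ (X ρ) = -ℓ(n+2ℓ-2) Y Δ^{ℓ-1} ρ + 2ℓ Z^b ∇_b Δ^{ℓ-1} ρ + X Δ^ℓ ρ`,
modeled abstractly via modules with commuting operators `∇_a` and formal tractor
generators `Y, Z^b, X` obeying the flat commutation rules. -/
theorem laplacian_power_commute_X
    (n ℓ : ℕ) (hn : 3 ≤ n) (hl : 1 ≤ ℓ)
    (V W : Type) [AddCommGroup V] [Module ℝ V] [AddCommGroup W] [Module ℝ W]
    (Dv : Fin n → Module.End ℝ V) (Dw : Fin n → Module.End ℝ W)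
    (X Y : V →ₗ[ℝ] W) (Z : Fin n → V →ₗ[ℝ] W)
    (hcomm : ∀ a b, Dv a * Dv b = Dv b * Dv a)
    (hY : ∀ (a : Fin n) (σ : V), Dw a (Y σ) = Y (Dv a σ))
    (hZ : ∀ (a : Fin n) (μ : Fin n → V),
      Dw a (∑ b, Z b (μ b)) = -(Y (μ a)) + ∑ b, Z b (Dv a (μ b)))
    (hX : ∀ (a : Fin n) (ρ : V), Dw a (X ρ) = Z a ρ + X (Dv a ρ))
    (ρ : V) :
    ((∑ a, Dw a * Dw a) ^ ℓ) (X ρ)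
      = (-((ℓ : ℝ) * ((n : ℝ) + 2 * (ℓ : ℝ) - 2))) •
            Y (((∑ a, Dv a * Dv a) ^ (ℓ - 1)) ρ)
        + (2 * (ℓ : ℝ)) •
            ∑ b, Z b (Dv b (((∑ a, Dv a * Dv a) ^ (ℓ - 1)) ρ))
        + X (((∑ a, Dv a * Dv a) ^ ℓ) ρ) := by
  set Δv : Module.End ℝ V := ∑ a, Dv a * Dv a with hΔv
  set Δw : Module.End ℝ W := ∑ a, Dw a * Dw a with hΔw
  -- commuting of Δv with each Dv b
  have hmul : ∀ a b, Dv a * Dv a * Dv b = Dv b * (Dv a * Dv a) := by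
    intro a b
    rw [mul_assoc, hcomm a b, ← mul_assoc, hcomm a b, mul_assoc]
  have hcΔ : ∀ (b : Fin n) (τ : V), Δv (Dv b τ) = Dv b (Δv τ) := by
    intro b τ
    have : Δv * Dv b = Dv b * Δv := by
      rw [hΔv, Finset.sum_mul, Finset.mul_sum]
      exact Finset.sum_congr rfl fun a _ => hmul a b
    calc Δv (Dv b τ) = (Δv * Dv b) τ := rfl
      _ = (Dv b * Δv) τ := by rw [this]
      _ = Dv b (Δv τ) := rfl
  -- single-Z commutation
  have hZ1 : ∀ (a c : Fin n) (ρ : V),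
      Dw a (Z c ρ) = (if a = c then -(Y ρ) else 0) + Z c (Dv a ρ) := by
    intro a c ρ
    have h := hZ a (fun b => if b = c then ρ else (0 : V))
    simp only [apply_ite, map_zero, neg_zero, Finset.sum_ite_eq',
      Finset.mem_univ, if_true] at h
    simpa [eq_comm] using h
  -- Δw on Y
  have hA : ∀ σ : V, Δw (Y σ) = Y (Δv σ) := by
    intro σ
    simp [hΔw, hΔv, LinearMap.sum_apply, Module.End.mul_apply, hY, ← map_sum]
  -- Δw on X
  have hC : ∀ τ : V, Δw (X τ) = (-(n : ℝ)) • Y τ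
      + (2 : ℝ) • ∑ b, Z b (Dv b τ) + X (Δv τ) := by
    intro τ
    have step : ∀ a : Fin n, Dw a (Dw a (X τ))
        = -(Y τ) + (Z a (Dv a τ) + Z a (Dv a τ)) + X (Dv a (Dv a τ)) := by
      intro a
      rw [hX a τ, map_add, hZ1 a a τ, hX a (Dv a τ)]
      simp
      abel
    calc Δw (X τ) = ∑ a, Dw a (Dw a (X τ)) := by
          simp [hΔw, LinearMap.sum_apply, Module.End.mul_apply]
      _ = ∑ a, (-(Y τ) + (Z a (Dv a τ) + Z a (Dv a τ)) + X (Dv a (Dv a τ))) :=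
          Finset.sum_congr rfl fun a _ => step a
      _ = (-(n : ℝ)) • Y τ + (2 : ℝ) • ∑ b, Z b (Dv b τ) + X (Δv τ) := by
          rw [Finset.sum_add_distrib, Finset.sum_add_distrib]
          simp [hΔv, LinearMap.sum_apply, Module.End.mul_apply, ← map_sum,
            Finset.sum_neg_distrib, two_smul, Finset.sum_add_distrib]
          module
  -- Δw on the Z-term
  have hD : ∀ τ : V, Δw (∑ b, Z b (Dv b τ))
      = (-2 : ℝ) • Y (Δv τ) + ∑ b, Z b (Dv b (Δv τ)) := by
    intro τ
    have step : ∀ a : Fin n, Dw a (Dw a (∑ b, Z b (Dv b τ)))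
        = -(Y (Dv a (Dv a τ))) + -(Y (Dv a (Dv a τ)))
          + ∑ b, Z b (Dv a (Dv a (Dv b τ))) := by
      intro a
      rw [hZ a (fun b => Dv b τ), map_add, map_neg, hY,
        hZ a (fun b => Dv a (Dv b τ))]
      abel
    calc Δw (∑ b, Z b (Dv b τ)) = ∑ a, Dw a (Dw a (∑ b, Z b (Dv b τ))) := by
          simp only [hΔw, LinearMap.sum_apply, Module.End.mul_apply]
      _ = ∑ a, (-(Y (Dv a (Dv a τ))) + -(Y (Dv a (Dv a τ)))
            + ∑ b, Z b (Dv a (Dv a (Dv b τ)))) :=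
          Finset.sum_congr rfl fun a _ => step a
      _ = (-2 : ℝ) • Y (Δv τ) + ∑ b, Z b (Dv b (Δv τ)) := by
          rw [Finset.sum_add_distrib, Finset.sum_add_distrib, Finset.sum_comm]
          have h1 : ∀ b : Fin n, ∑ a, Z b (Dv a (Dv a (Dv b τ)))
              = Z b (Dv b (Δv τ)) := by
            intro b
            rw [← map_sum, ← hcΔ b τ]
            congr 1
            simp [hΔv, LinearMap.sum_apply, Module.End.mul_apply]
          rw [Finset.sum_congr rfl fun b _ => h1 b]
          have h2 : ∑ a : Fin n, -(Y (Dv a (Dv a τ))) = -(Y (Δv τ)) := by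
            rw [Finset.sum_neg_distrib, ← map_sum]
            congr 2
            simp [hΔv, LinearMap.sum_apply, Module.End.mul_apply]
          rw [h2]
          module
  -- induction on ℓ
  induction ℓ, hl using Nat.le_induction with
  | base =>
    have := hC ρ
    simpa using this
  | succ m hm IH =>
    have hpowW : (Δw ^ (m + 1)) (X ρ) = Δw ((Δw ^ m) (X ρ)) := by
      rw [pow_succ', Module.End.mul_apply]
    have hpowV : ∀ x : V, Δv ((Δv ^ (m - 1)) x) = (Δv ^ m) x := by
      intro x
      rw [← Module.End.mul_apply, ← pow_succ', Nat.sub_add_cancel hm]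
    have hpowV2 : ∀ x : V, Δv ((Δv ^ m) x) = (Δv ^ (m + 1)) x := by
      intro x
      rw [← Module.End.mul_apply, ← pow_succ']
    rw [hpowW, IH, map_add, map_add, map_smul, map_smul, hA, hD, hC,
      hpowV, hpowV2]
    simp only [Nat.add_sub_cancel]
    push_cast
    module
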